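/- The Smart Reverse Rejecting (SRR) rule is strategyproof: if agent i's priority for the preferential categories decreases from instance I to instance I' (the priorities of c_u^1 and c_u^2 remain equal to the baseline ordering ≻_π, which is the same in both instances), and i is unmatched under the SRR rule at I, then i is unmatched under the SRR rule at I'. -/

import Mathlib

open scoped Classical

/-- An instance of the rationing problem: a quota for every category and, for every
category `c`, a priority ranking `≿_c`: a total preorder on `N ∪ {∅}`, where we model
`N ∪ {∅}` as `Option N` with `none` playing the role of `∅`. -/
structure Inst (N C : Type*) where
  quota : C → ℕ
  prio : C → Option N → Option N → Prop
  total : ∀ c x y, prio c x y ∨ prio c y x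
  trans : ∀ c x y z, prio c x y → prio c y z → prio c x z

namespace Inst

variable {N C : Type*}

/-- The strict part `≻_c` of the priority ranking `≿_c`. -/
def Strict (I : Inst N C) (c : C) (x y : Option N) : Prop :=
  I.prio c x y ∧ ¬ I.prio c y x

/-- Agent `i` is eligible for category `c` if `i ≻_c ∅`. -/
def Eligible (I : Inst N C) (i : N) (c : C) : Prop :=
  I.Strict c (some i) none

end Inst

variable {N C : Type*} [Fintype N] [DecidableEq N] [DecidableEq C]

/-- The number of matched agents of (the function) `μ`. -/
def msize (μ : N → Option C) : ℕ :=
  (Finset.univ.filter fun i => μ i ≠ none).card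

/-- `μ` satisfies the capacity constraints: every category `c` is matched
to at most `quota c` agents. -/
def Inst.IsMatching (I : Inst N C) (μ : N → Option C) : Prop :=
  ∀ c, (Finset.univ.filter fun i => μ i = some c).card ≤ I.quota c

/-- A baseline ordering `≻_π`, given as a duplicate-free list of all agents,
listed from highest priority to lowest priority; so `i ≻_π j` iff
`order.idxOf i < order.idxOf j`. -/
def IsBaseline (order : List N) : Prop :=
  order.Nodup ∧ ∀ i : N, i ∈ order

/-- Agent `i`'s priority decreases from instance `I` to instance `I'`: quotas are unchanged,
the rankings restricted to `(N ∪ {∅}) \ {i}` are unchanged, and `i` only moves down: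
for all `x ≠ i`, `x ≿_c i` implies `x ≿'_c i` and `x ≻_c i` implies `x ≻'_c i`. -/
def PrioDecreases (I I' : Inst N C) (i : N) : Prop :=
  I.quota = I'.quota ∧
  (∀ (c : C) (x y : Option N), x ≠ some i → y ≠ some i → (I.prio c x y ↔ I'.prio c x y)) ∧
  (∀ (c : C) (x : Option N), x ≠ some i → I.prio c x (some i) → I'.prio c x (some i)) ∧
  (∀ (c : C) (x : Option N), x ≠ some i → I.Strict c x (some i) → I'.Strict c x (some i))

/-- `μ` complies with the eligibility requirements. -/
def Complies (I : Inst N C) (μ : N → Option C) : Prop :=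
  ∀ (i : N) (c : C), μ i = some c → I.Eligible i c

/-- The number of agents matched to a preferential category, i.e. a category other than the
unreserved subcategories `cu1` and `cu2`. -/
def beneCount2 (cu1 cu2 : C) (μ : N → Option C) : ℕ :=
  (Finset.univ.filter fun i => μ i ≠ none ∧ μ i ≠ some cu1 ∧ μ i ≠ some cu2).card

/-- `μ` is a matching of the reservation graph of the instance restricted to the
preferential categories that leaves all agents of `S` unmatched. -/
def PMatch (I : Inst N C) (cu1 cu2 : C) (S : Finset N) (μ : N → Option C) : Prop :=
  I.IsMatching μ ∧ (∀ i ∈ S, μ i = none) ∧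
    ∀ (i : N) (c : C), μ i = some c → c ≠ cu1 ∧ c ≠ cu2 ∧ I.Eligible i c

/-- The maximum number of agents of `N \ S` that can simultaneously be matched to
preferential categories. -/
noncomputable def msAvoid (I : Inst N C) (cu1 cu2 : C) (S : Finset N) : ℕ :=
  sSup {k | ∃ μ : N → Option C, PMatch I cu1 cu2 S μ ∧ msize μ = k}

/-- The set `N_1` of agents receiving an unreserved unit of `c_u^1` under the SRR rule:
considering the agents in order of the baseline ordering from highest to lowest priority,
agent `i` is added to `N_1` if `|N_1| < q_{c_u^1}` and the agents in `N \ (N_1 ∪ {i})` can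
still be matched to the preferential categories so as to form a maximum beneficiary
assignment. -/
noncomputable def srrN1 (I : Inst N C) (cu1 cu2 : C) (order : List N) : Finset N :=
  order.foldl
    (fun N1 i =>
      if N1.card < I.quota cu1 ∧
          msAvoid I cu1 cu2 (insert i N1) = msAvoid I cu1 cu2 (∅ : Finset N) then
        insert i N1
      else N1) ∅

/-- `μ` is a matching of the reduced reservation graph (restricted to the preferential
categories) in which the agents of `N1` are removed and, additionally, all edges `{j,c}`
such that some rejected agent `i ∈ R` has `i ≻_c j` are removed. -/
def PMatchR (I : Inst N C) (cu1 cu2 : C) (N1 R : Finset N) (μ : N → Option C) : Prop :=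
  PMatch I cu1 cu2 (N1 ∪ R) μ ∧
    ∀ (i : N) (c : C), μ i = some c → ∀ j ∈ R, ¬ I.Strict c (some j) (some i)

/-- The size of a maximum size matching of the reduced reservation graph (restricted to the
preferential categories, without the agents of `N1`, with rejected set `R`). -/
noncomputable def msR (I : Inst N C) (cu1 cu2 : C) (N1 R : Finset N) : ℕ :=
  sSup {k | ∃ μ : N → Option C, PMatchR I cu1 cu2 N1 R μ ∧ msize μ = k}

/-- The rejected set of the RR rule run on the agents outside `N1` with the preferential
categories, processing the agents from lowest to highest baseline priority. -/
noncomputable def srrRej (I : Inst N C) (cu1 cu2 : C) (order : List N) (N1 : Finset N) :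
    Finset N :=
  (order.filter fun i => decide (i ∉ N1)).foldr
    (fun i R =>
      if msR I cu1 cu2 N1 (insert i R) = msR I cu1 cu2 N1 (∅ : Finset N) then insert i R
      else R) ∅

/-- The final matching of the SRR rule, given the set `N1` of agents matched to `c_u^1` and
the matching `μP` of the remaining agents to the preferential categories: the agents left
unmatched receive the `q_{c_u^2}` units of `c_u^2` in order of the baseline ordering from
highest to lowest priority. -/
noncomputable def srrFinal (I : Inst N C) (cu1 cu2 : C) (order : List N) (N1 : Finset N)
    (μP : N → Option C) : N → Option C := fun i =>
  if i ∈ N1 then some cu1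
  else
    match μP i with
    | some c => some c
    | none =>
      if (Finset.univ.filter fun j =>
            j ∉ N1 ∧ μP j = none ∧ order.idxOf j < order.idxOf i).card <
          I.quota cu2 then
        some cu2
      else none

/-- `μ` is a possible output of the Smart Reverse Rejecting (SRR) rule. -/
def IsSRROutcome (I : Inst N C) (cu1 cu2 : C) (order : List N) (μ : N → Option C) : Prop :=
  ∃ μP : N → Option C,
    PMatchR I cu1 cu2 (srrN1 I cu1 cu2 order) (srrRej I cu1 cu2 order (srrN1 I cu1 cu2 order))
      μP ∧
    msize μP =
      msR I cu1 cu2 (srrN1 I cu1 cu2 order) (srrRej I cu1 cu2 order (srrN1 I cu1 cu2 order)) ∧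
    μ = srrFinal I cu1 cu2 order (srrN1 I cu1 cu2 order) μP


section AuxBasic

variable {I I' : Inst N C} {cu1 cu2 : C} {S T N1 R : Finset N} {μ : N → Option C}

lemma msize_le_card (μ : N → Option C) : msize μ ≤ Fintype.card N :=
  Finset.card_le_card (Finset.filter_subset _ _) |>.trans (le_of_eq (Finset.card_univ))

lemma pmatch_none (I : Inst N C) (cu1 cu2 : C) (S : Finset N) :
    PMatch I cu1 cu2 S (fun _ => none) := by
  refine ⟨fun c => ?_, fun i _ => rfl, fun i c h => by simp at h⟩
  simp [Inst.IsMatching]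

lemma pmatch_anti (h : S ⊆ T) (hμ : PMatch I cu1 cu2 T μ) : PMatch I cu1 cu2 S μ :=
  ⟨hμ.1, fun i hi => hμ.2.1 i (h hi), hμ.2.2⟩

lemma msAvoid_bddAbove (I : Inst N C) (cu1 cu2 : C) (S : Finset N) :
    BddAbove {k | ∃ μ : N → Option C, PMatch I cu1 cu2 S μ ∧ msize μ = k} := by
  refine ⟨Fintype.card N, fun k hk => ?_⟩
  obtain ⟨μ, -, rfl⟩ := hk
  exact msize_le_card μ

lemma msAvoid_spec (I : Inst N C) (cu1 cu2 : C) (S : Finset N) :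
    ∃ μ : N → Option C, PMatch I cu1 cu2 S μ ∧ msize μ = msAvoid I cu1 cu2 S := by
  have hne : {k | ∃ μ : N → Option C, PMatch I cu1 cu2 S μ ∧ msize μ = k}.Nonempty :=
    ⟨msize (fun _ => (none : Option C)), fun _ => none, pmatch_none I cu1 cu2 S, rfl⟩
  exact Nat.sSup_mem hne (msAvoid_bddAbove I cu1 cu2 S)

lemma le_msAvoid (hμ : PMatch I cu1 cu2 S μ) : msize μ ≤ msAvoid I cu1 cu2 S :=
  le_csSup (msAvoid_bddAbove I cu1 cu2 S) ⟨μ, hμ, rfl⟩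

lemma msAvoid_anti (h : S ⊆ T) : msAvoid I cu1 cu2 T ≤ msAvoid I cu1 cu2 S := by
  obtain ⟨μ, hμ, hs⟩ := msAvoid_spec I cu1 cu2 T
  rw [← hs]
  exact le_msAvoid (pmatch_anti h hμ)

lemma pmatchR_none (I : Inst N C) (cu1 cu2 : C) (N1 R : Finset N) :
    PMatchR I cu1 cu2 N1 R (fun _ => none) :=
  ⟨pmatch_none I cu1 cu2 _, fun i c h => by simp at h⟩

lemma pmatchR_anti (h : S ⊆ R) (hμ : PMatchR I cu1 cu2 N1 R μ) : PMatchR I cu1 cu2 N1 S μ :=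
  ⟨pmatch_anti (Finset.union_subset_union_right h) hμ.1,
   fun i c hc j hj => hμ.2 i c hc j (h hj)⟩

lemma msR_bddAbove (I : Inst N C) (cu1 cu2 : C) (N1 R : Finset N) :
    BddAbove {k | ∃ μ : N → Option C, PMatchR I cu1 cu2 N1 R μ ∧ msize μ = k} := by
  refine ⟨Fintype.card N, fun k hk => ?_⟩
  obtain ⟨μ, -, rfl⟩ := hk
  exact msize_le_card μ

lemma msR_spec (I : Inst N C) (cu1 cu2 : C) (N1 R : Finset N) :
    ∃ μ : N → Option C, PMatchR I cu1 cu2 N1 R μ ∧ msize μ = msR I cu1 cu2 N1 R := by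
  have hne : {k | ∃ μ : N → Option C, PMatchR I cu1 cu2 N1 R μ ∧ msize μ = k}.Nonempty :=
    ⟨msize (fun _ => (none : Option C)), fun _ => none, pmatchR_none I cu1 cu2 N1 R, rfl⟩
  exact Nat.sSup_mem hne (msR_bddAbove I cu1 cu2 N1 R)

lemma le_msR (hμ : PMatchR I cu1 cu2 N1 R μ) : msize μ ≤ msR I cu1 cu2 N1 R :=
  le_csSup (msR_bddAbove I cu1 cu2 N1 R) ⟨μ, hμ, rfl⟩

lemma msR_anti (h : S ⊆ R) : msR I cu1 cu2 N1 R ≤ msR I cu1 cu2 N1 S := by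
  obtain ⟨μ, hμ, hs⟩ := msR_spec I cu1 cu2 N1 R
  rw [← hs]
  exact le_msR (pmatchR_anti h hμ)

lemma msR_empty (I : Inst N C) (cu1 cu2 : C) (N1 : Finset N) :
    msR I cu1 cu2 N1 ∅ = msAvoid I cu1 cu2 N1 := by
  unfold msR msAvoid
  congr 1
  ext k
  constructor
  · rintro ⟨μ, hμ, rfl⟩
    exact ⟨μ, by simpa using hμ.1, rfl⟩
  · rintro ⟨μ, hμ, rfl⟩
    exact ⟨μ, ⟨by simpa using hμ, fun i c hc j hj => by simp at hj⟩, rfl⟩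

end AuxBasic


set_option linter.unusedSectionVars false

section AuxTransfer

variable {I I' : Inst N C} {i : N} {cu1 cu2 : C} {S T N1 R : Finset N} {μ : N → Option C}

lemma strict_trans_left {c : C} {x y z : Option N} (h1 : I.Strict c x y) (h2 : I.Strict c y z) :
    I.Strict c x z := by
  exact ⟨I.trans c x y z h1.1 h2.1, fun h => h2.2 (I.trans c z x y h h1.1)⟩

lemma strict_irrefl {c : C} {x : Option N} (h : I.Strict c x x) : False := h.2 h.1

lemma elig_iff (hdec : PrioDecreases I I' i) {j : N} (hj : j ≠ i) (c : C) :
    I.Eligible j c ↔ I'.Eligible j c := by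
  have h1 := hdec.2.1 c (some j) none (by simp [hj]) (by simp)
  have h2 := hdec.2.1 c none (some j) (by simp) (by simp [hj])
  unfold Inst.Eligible Inst.Strict
  rw [h1, h2]

lemma elig_i (hdec : PrioDecreases I I' i) {c : C} (h : I'.Eligible i c) : I.Eligible i c := by
  have hn : ¬ I.prio c none (some i) := fun hp => h.2 (hdec.2.2.1 c none (by simp) hp)
  refine ⟨?_, hn⟩
  rcases I.total c (some i) none with h' | h'
  · exact h'
  · exact absurd h' hn

lemma strict_iff (hdec : PrioDecreases I I' i) {c : C} {x y : Option N}
    (hx : x ≠ some i) (hy : y ≠ some i) : I.Strict c x y ↔ I'.Strict c x y := by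
  unfold Inst.Strict
  rw [hdec.2.1 c x y hx hy, hdec.2.1 c y x hy hx]

lemma strict_i_down (hdec : PrioDecreases I I' i) {c : C} {y : Option N} (hy : y ≠ some i)
    (h : I'.Strict c (some i) y) : I.Strict c (some i) y := by
  have hn : ¬ I.prio c y (some i) := fun hp => h.2 (hdec.2.2.1 c y hy hp)
  refine ⟨?_, hn⟩
  rcases I.total c (some i) y with h' | h'
  · exact h'
  · exact absurd h' hn

/-- Any `I'`-matching is an `I`-matching (as `i`'s edges only shrink). -/
lemma pmatch_of' (hdec : PrioDecreases I I' i) (hμ : PMatch I' cu1 cu2 S μ) :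
    PMatch I cu1 cu2 S μ := by
  refine ⟨fun c => (hμ.1 c).trans (le_of_eq ?_), hμ.2.1, fun j c hc => ?_⟩
  · rw [hdec.1]
  · obtain ⟨hc1, hc2, he⟩ := hμ.2.2 j c hc
    refine ⟨hc1, hc2, ?_⟩
    by_cases hj : j = i
    · subst hj; exact elig_i hdec he
    · exact (elig_iff hdec hj c).2 he

lemma msAvoid_le_of' (hdec : PrioDecreases I I' i) (S : Finset N) :
    msAvoid I' cu1 cu2 S ≤ msAvoid I cu1 cu2 S := by
  obtain ⟨μ, hμ, hs⟩ := msAvoid_spec I' cu1 cu2 S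
  rw [← hs]
  exact le_msAvoid (pmatch_of' hdec hμ)

/-- If `i` is avoided, `I`- and `I'`-matchings coincide. -/
lemma pmatch_to' (hdec : PrioDecreases I I' i) (hiS : i ∈ S) (hμ : PMatch I cu1 cu2 S μ) :
    PMatch I' cu1 cu2 S μ := by
  refine ⟨fun c => (hμ.1 c).trans (le_of_eq ?_), hμ.2.1, fun j c hc => ?_⟩
  · rw [← hdec.1]
  · obtain ⟨hc1, hc2, he⟩ := hμ.2.2 j c hc
    have hj : j ≠ i := fun h => by
      subst h; rw [hμ.2.1 j hiS] at hc; exact (nomatch hc)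
    exact ⟨hc1, hc2, (elig_iff hdec hj c).1 he⟩

lemma msAvoid_eq_of_mem (hdec : PrioDecreases I I' i) (hiS : i ∈ S) :
    msAvoid I' cu1 cu2 S = msAvoid I cu1 cu2 S := by
  refine le_antisymm (msAvoid_le_of' hdec S) ?_
  obtain ⟨μ, hμ, hs⟩ := msAvoid_spec I cu1 cu2 S
  rw [← hs]
  exact le_msAvoid (pmatch_to' hdec hiS hμ)

/-- The key witness transfer: a maximum `I`-matching for a rejected set `R ∋ i`
is a valid `I'`-matching for any rejected subset `T ⊆ R`. -/
lemma pmatchR_to' (hdec : PrioDecreases I I' i) (hiR : i ∈ R) (hTR : T ⊆ R)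
    (hμ : PMatchR I cu1 cu2 N1 R μ) : PMatchR I' cu1 cu2 N1 T μ := by
  have hnone : ∀ j ∈ N1 ∪ R, μ j = none := hμ.1.2.1
  have hinone : μ i = none := hnone i (Finset.mem_union_right _ hiR)
  constructor
  · refine pmatch_anti (Finset.union_subset_union_right hTR) ?_
    exact pmatch_to' hdec (Finset.mem_union_right _ hiR) hμ.1
  · intro k c hc r hr
    have hk : k ≠ i := fun h => by
      subst h; rw [hinone] at hc; exact (nomatch hc)
    have horig : ¬ I.Strict c (some r) (some k) := hμ.2 k c hc r (hTR hr)
    by_cases hri : r = i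
    · subst hri
      intro h'
      exact horig (strict_i_down hdec (by simp [hk]) h')
    · intro h'
      exact horig ((strict_iff hdec (by simp [hri]) (by simp [hk])).2 h')

/-- Conversely, for an `i`-free rejected set, `I'`-matchings are `I`-matchings. -/
lemma pmatchR_of' (hdec : PrioDecreases I I' i) (hiT : i ∉ T)
    (hμ : PMatchR I' cu1 cu2 N1 T μ) : PMatchR I cu1 cu2 N1 T μ := by
  constructor
  · exact pmatch_of' hdec hμ.1
  · intro k c hc r hr
    have hri : r ≠ i := fun h => hiT (h ▸ hr)
    have horig : ¬ I'.Strict c (some r) (some k) := hμ.2 k c hc r hr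
    by_cases hk : k = i
    · subst hk
      intro h'
      exact horig (hdec.2.2.2 c (some r) (by simp [hri]) h')
    · intro h'
      exact horig ((strict_iff hdec (by simp [hri]) (by simp [hk])).1 h')

lemma msR_le_of' (hdec : PrioDecreases I I' i) (hiT : i ∉ T) (N1 : Finset N) :
    msR I' cu1 cu2 N1 T ≤ msR I cu1 cu2 N1 T := by
  obtain ⟨μ, hμ, hs⟩ := msR_spec I' cu1 cu2 N1 T
  rw [← hs]
  exact le_msR (pmatchR_of' hdec hiT hμ)

end AuxTransfer


section AuxFold

variable {f : N → Finset N → Finset N} {g : Finset N → N → Finset N}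

lemma foldr_subset (hf : ∀ x T, f x T = T ∨ f x T = insert x T) (L : List N) (T : Finset N) :
    T ⊆ L.foldr f T := by
  induction L with
  | nil => exact Finset.Subset.refl T
  | cons x L ih =>
    refine ih.trans ?_
    rcases hf x (L.foldr f T) with h | h <;> rw [List.foldr_cons, h]
    exact Finset.subset_insert x _

lemma foldr_mem (hf : ∀ x T, f x T = T ∨ f x T = insert x T) (L : List N) (T : Finset N)
    {y : N} (hy : y ∈ L.foldr f T) : y ∈ T ∨ y ∈ L := by
  induction L with
  | nil => exact Or.inl hy
  | cons x L ih =>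
    rw [List.foldr_cons] at hy
    rcases hf x (L.foldr f T) with h | h <;> rw [h] at hy
    · rcases ih hy with h' | h'
      · exact Or.inl h'
      · exact Or.inr (List.mem_cons_of_mem x h')
    · rcases Finset.mem_insert.1 hy with h' | h'
      · exact Or.inr (h' ▸ (List.mem_cons_self (a := x) (l := L)))
      · rcases ih h' with h'' | h''
        · exact Or.inl h''
        · exact Or.inr (List.mem_cons_of_mem x h'')

lemma foldr_inv {P : Finset N → Prop} (hP : ∀ x T, P T → P (f x T)) (L : List N)
    {T : Finset N} (hT : P T) : P (L.foldr f T) := by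
  induction L with
  | nil => exact hT
  | cons x L ih => exact hP x _ ih

lemma foldl_subset (hg : ∀ T x, T ⊆ g T x) (L : List N) (T : Finset N) :
    T ⊆ L.foldl g T := by
  induction L generalizing T with
  | nil => exact Finset.Subset.refl T
  | cons x L ih => exact (hg T x).trans (ih _)

lemma mem_foldr_self (hf : ∀ x T, f x T = T ∨ f x T = insert x T)
    {L1 L2 : List N} {x : N} {T : Finset N} (hx1 : x ∉ L1) (hxT : x ∉ T) (hxL2 : x ∉ L2)
    (hx : x ∈ (L1 ++ x :: L2).foldr f T) : f x (L2.foldr f T) = insert x (L2.foldr f T) := by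
  rcases hf x (L2.foldr f T) with h | h
  · exfalso
    rw [List.foldr_append, List.foldr_cons, h] at hx
    rcases foldr_mem hf L1 _ hx with h' | h'
    · rcases foldr_mem hf L2 T h' with h'' | h''
      · exact hxT h''
      · exact hxL2 h''
    · exact hx1 h'
  · exact h

end AuxFold

section AuxUpdate

variable {J : Inst N C} {cu1 cu2 : C} {N1 R : Finset N}

/-- The measure used in the exchange argument: the total "priority deficiency"
of matched agents. -/
noncomputable def mweight (J : Inst N C) : Option C → N → ℕ
  | none, _ => 0
  | some c, a => (Finset.univ.filter fun b => J.Strict c (some b) (some a)).card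

noncomputable def mmeas (J : Inst N C) (μ : N → Option C) : ℕ :=
  ∑ a : N, mweight J (μ a) a

lemma mmeas_congr_aux {μ ν : N → Option C} {j k : N} (hjk : j ≠ k)
    (h : ∀ a, a ≠ j → a ≠ k → μ a = ν a) :
    mmeas J μ + mweight J (ν j) j + mweight J (ν k) k
      = mmeas J ν + mweight J (μ j) j + mweight J (μ k) k := by
  classical
  unfold mmeas
  have huniv : (Finset.univ : Finset N) = insert j (insert k (Finset.univ \ {j, k})) := by
    ext a
    by_cases haj : a = j <;> by_cases hak : a = k <;> simp [haj, hak, hjk]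
  have hjmem : j ∉ insert k (Finset.univ \ {j, k}) := by simp [hjk]
  have hkmem : k ∉ (Finset.univ \ {j, k}) := by simp
  have hsum : ∑ a ∈ Finset.univ \ {j, k}, mweight J (μ a) a
      = ∑ a ∈ Finset.univ \ {j, k}, mweight J (ν a) a := by
    refine Finset.sum_congr rfl fun a ha => ?_
    have h1 : a ≠ j := by simp at ha; exact ha.1
    have h2 : a ≠ k := by simp at ha; exact ha.2
    rw [h a h1 h2]
  rw [huniv, Finset.sum_insert hjmem, Finset.sum_insert hkmem,
    Finset.sum_insert hjmem, Finset.sum_insert hkmem, hsum]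
  ring

end AuxUpdate


section AuxExchange

variable {J : Inst N C} {cu1 cu2 : C} {N1 R : Finset N} {μ : N → Option C}

/-- The exchange step: if a matching leaves `j` (not rejected) unmatched while matching
some `k` with lower priority at `k`'s category, we can swap them, decreasing the measure. -/
lemma exchange_step (hμ : PMatchR J cu1 cu2 N1 R μ) {j k : N} {c : C}
    (hj1 : j ∉ N1) (hj2 : j ∉ R) (hjnone : μ j = none)
    (hk : μ k = some c) (hjk : J.Strict c (some j) (some k)) :
    ∃ ν : N → Option C, PMatchR J cu1 cu2 N1 R ν ∧ msize ν = msize μ ∧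
      ν k = none ∧ mmeas J ν < mmeas J μ := by
  classical
  have hjk' : j ≠ k := fun h => by rw [h, hk] at hjnone; exact (nomatch hjnone)
  set ν : N → Option C := Function.update (Function.update μ k none) j (some c) with hνdef
  have hνj : ν j = some c := by simp [hνdef]
  have hνk : ν k = none := by simp [hνdef, Function.update_of_ne (Ne.symm hjk')]
  have hνa : ∀ a, a ≠ j → a ≠ k → ν a = μ a := by
    intro a haj hak
    simp [hνdef, Function.update_of_ne haj, Function.update_of_ne hak]
  have hkel := hμ.1.2.2 k c hk
  have hjel : J.Eligible j c := strict_trans_left hjk hkel.2.2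
  -- the matched sets per category agree in cardinality
  have hcard : ∀ c' : C, (Finset.univ.filter fun a => ν a = some c').card
      = (Finset.univ.filter fun a => μ a = some c').card := by
    intro c'
    by_cases hcc : c' = c
    · rw [hcc]
      have hset : (Finset.univ.filter fun a => ν a = some c)
          = insert j ((Finset.univ.filter fun a => μ a = some c).erase k) := by
        ext a
        by_cases haj : a = j
        · subst haj; simp [hνj]
        · by_cases hak : a = k
          · subst hak; simp [hνk, haj]
          · simp [hνa a haj hak, haj, hak]
      rw [hset, Finset.card_insert_of_notMem (by simp [hjnone]),
        Finset.card_erase_of_mem (by simp [hk]), Nat.sub_add_cancel]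
      exact Finset.card_pos.2 ⟨k, by simp [hk]⟩
    · congr 1
      ext a
      by_cases haj : a = j
      · subst haj
        simp only [hνj, hjnone, Finset.mem_filter, Finset.mem_univ, true_and]
        constructor
        · intro h
          rw [Option.some_inj] at h
          exact absurd h.symm hcc
        · intro h; exact (nomatch h)
      · by_cases hak : a = k
        · subst hak
          simp only [hνk, hk, Finset.mem_filter, Finset.mem_univ, true_and]
          constructor
          · intro h; exact (nomatch h)
          · intro h
            rw [Option.some_inj] at h
            exact absurd h.symm hcc
        · simp [hνa a haj hak]
  have hmm : PMatchR J cu1 cu2 N1 R ν := by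
    refine ⟨⟨fun c' => (hcard c').le.trans (hμ.1.1 c'), fun x hx => ?_, fun a c' ha => ?_⟩,
      fun a c' ha r hr => ?_⟩
    · by_cases hxk : x = k
      · subst hxk; exact hνk
      · have hxj : x ≠ j := by
          rintro rfl
          rcases Finset.mem_union.1 hx with h' | h'
          · exact hj1 h'
          · exact hj2 h'
        rw [hνa x hxj hxk]
        exact hμ.1.2.1 x hx
    · by_cases haj : a = j
      · subst haj
        rw [hνj] at ha
        obtain rfl : c' = c := (Option.some_inj.1 ha).symm
        exact ⟨hkel.1, hkel.2.1, hjel⟩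
      · by_cases hak : a = k
        · subst hak; rw [hνk] at ha; exact (nomatch ha)
        · exact hμ.1.2.2 a c' (by rw [← hνa a haj hak]; exact ha)
    · by_cases haj : a = j
      · subst haj
        rw [hνj] at ha
        obtain rfl : c' = c := (Option.some_inj.1 ha).symm
        intro hstrict
        exact hμ.2 k _ hk r hr (strict_trans_left hstrict hjk)
      · by_cases hak : a = k
        · subst hak; rw [hνk] at ha; exact (nomatch ha)
        · exact hμ.2 a c' (by rw [← hνa a haj hak]; exact ha) r hr
  have hsize : msize ν = msize μ := by
    unfold msize
    have hset : (Finset.univ.filter fun a => ν a ≠ none)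
        = insert j ((Finset.univ.filter fun a => μ a ≠ none).erase k) := by
      ext a
      by_cases haj : a = j
      · subst haj; simp [hνj]
      · by_cases hak : a = k
        · subst hak; simp [hνk, haj]
        · simp [hνa a haj hak, haj, hak]
    rw [hset, Finset.card_insert_of_notMem (by simp [hjnone]),
      Finset.card_erase_of_mem (by simp [hk]), Nat.sub_add_cancel]
    exact Finset.card_pos.2 ⟨k, by simp [hk]⟩
  have hwlt : mweight J (some c) j < mweight J (some c) k := by
    unfold mweight
    apply Finset.card_lt_card
    constructor
    · intro b hb
      simp only [Finset.mem_filter, Finset.mem_univ, true_and] at hb ⊢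
      exact strict_trans_left hb hjk
    · intro hsub
      have : j ∈ Finset.univ.filter fun b => J.Strict c (some b) (some j) :=
        hsub (by simp [hjk])
      simp only [Finset.mem_filter] at this
      exact strict_irrefl this.2
  have hmeas : mmeas J ν < mmeas J μ := by
    have := mmeas_congr_aux (J := J) hjk' (fun a haj hak => hνa a haj hak)
    rw [hνj, hνk, hjnone, hk] at this
    have h0 : mweight J (none : Option C) j = 0 := rfl
    have h0' : mweight J (none : Option C) k = 0 := rfl
    rw [h0, h0'] at this
    omega
  exact ⟨ν, hmm, hsize, hνk, hmeas⟩

end AuxExchange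


section AuxRej

variable {J : Inst N C} {cu1 cu2 : C} {N1 : Finset N} {ord : List N}

noncomputable def rstep (J : Inst N C) (cu1 cu2 : C) (N1 : Finset N) :
    N → Finset N → Finset N := fun i R =>
  if msR J cu1 cu2 N1 (insert i R) = msR J cu1 cu2 N1 (∅ : Finset N) then insert i R else R

lemma srrRej_eq (J : Inst N C) (cu1 cu2 : C) (ord : List N) (N1 : Finset N) :
    srrRej J cu1 cu2 ord N1
      = (ord.filter fun i => decide (i ∉ N1)).foldr (rstep J cu1 cu2 N1) ∅ := rfl

lemma rstep_or (J : Inst N C) (cu1 cu2 : C) (N1 : Finset N) :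
    ∀ (x : N) (T : Finset N), rstep J cu1 cu2 N1 x T = T ∨
      rstep J cu1 cu2 N1 x T = insert x T := by
  intro x T
  unfold rstep
  split_ifs with h
  · exact Or.inr rfl
  · exact Or.inl rfl

lemma srrRej_msR (J : Inst N C) (cu1 cu2 : C) (ord : List N) (N1 : Finset N) :
    msR J cu1 cu2 N1 (srrRej J cu1 cu2 ord N1) = msR J cu1 cu2 N1 ∅ := by
  rw [srrRej_eq]
  refine foldr_inv (P := fun T => msR J cu1 cu2 N1 T = msR J cu1 cu2 N1 ∅) ?_ _ rfl
  intro x T hT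
  unfold rstep
  split_ifs with h
  · exact h
  · exact hT

lemma srrRej_mem_list {x : N} (hx : x ∈ srrRej J cu1 cu2 ord N1) :
    x ∈ ord.filter fun i => decide (i ∉ N1) := by
  rw [srrRej_eq] at hx
  rcases foldr_mem (rstep_or J cu1 cu2 N1) _ _ hx with h | h
  · exact absurd h (Finset.notMem_empty x)
  · exact h

lemma srrRej_not_mem_N1 {x : N} (hx : x ∈ srrRej J cu1 cu2 ord N1) : x ∉ N1 := by
  have := srrRej_mem_list hx
  rw [List.mem_filter] at this
  simpa using this.2

lemma srrRej_reject_spec (hnd : ord.Nodup) {j : N}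
    (hj : j ∈ ord.filter fun i => decide (i ∉ N1))
    (hjR : j ∉ srrRej J cu1 cu2 ord N1) :
    ∃ T : Finset N, T ⊆ srrRej J cu1 cu2 ord N1 ∧
      msR J cu1 cu2 N1 (insert j T) ≠ msR J cu1 cu2 N1 ∅ := by
  classical
  set L := ord.filter fun i => decide (i ∉ N1) with hLdef
  have hLnd : L.Nodup := hnd.filter _
  obtain ⟨L1, L2, hdecomp⟩ := List.append_of_mem hj
  have hnd2 : (L1 ++ j :: L2).Nodup := hdecomp ▸ hLnd
  have hjL1 : j ∉ L1 := by
    intro h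
    exact (List.nodup_append.1 hnd2).2.2 j h j List.mem_cons_self rfl
  have hjL2 : j ∉ L2 := by
    have := (List.nodup_append.1 hnd2).2.1
    exact (List.nodup_cons.1 this).1
  set T := L2.foldr (rstep J cu1 cu2 N1) ∅ with hTdef
  have hjT : j ∉ T := by
    intro h
    rcases foldr_mem (rstep_or J cu1 cu2 N1) _ _ h with h' | h'
    · exact Finset.notMem_empty j h'
    · exact hjL2 h'
  have hstepT : T ⊆ rstep J cu1 cu2 N1 j T := by
    rcases rstep_or J cu1 cu2 N1 j T with h | h <;> rw [h]
    exact Finset.subset_insert j T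
  have hRform : srrRej J cu1 cu2 ord N1
      = L1.foldr (rstep J cu1 cu2 N1) (rstep J cu1 cu2 N1 j T) := by
    rw [srrRej_eq, ← hLdef, hdecomp, List.foldr_append]
    rfl
  refine ⟨T, ?_, ?_⟩
  · rw [hRform]
    exact hstepT.trans (foldr_subset (rstep_or J cu1 cu2 N1) L1 _)
  · intro hcond
    apply hjR
    rw [hRform]
    have : rstep J cu1 cu2 N1 j T = insert j T := by
      unfold rstep
      rw [if_pos hcond]
    rw [this]
    exact foldr_subset (rstep_or J cu1 cu2 N1) L1 _ (Finset.mem_insert_self j T)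

/-- RR matches every non-rejected agent outside `N1`. -/
lemma rr_covers (J : Inst N C) (cu1 cu2 : C) (ord : List N) (N1 : Finset N)
    (hb : IsBaseline ord) {μ : N → Option C}
    (hμ : PMatchR J cu1 cu2 N1 (srrRej J cu1 cu2 ord N1) μ)
    (hmax : msize μ = msR J cu1 cu2 N1 (srrRej J cu1 cu2 ord N1))
    {j : N} (hj1 : j ∉ N1) (hj2 : j ∉ srrRej J cu1 cu2 ord N1) : μ j ≠ none := by
  classical
  set R := srrRej J cu1 cu2 ord N1 with hRdef
  suffices H : ∀ (n : ℕ) (μ : N → Option C) (j : N), mmeas J μ = n →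
      PMatchR J cu1 cu2 N1 R μ → msize μ = msR J cu1 cu2 N1 R → j ∉ N1 → j ∉ R →
      μ j ≠ none by
    exact H (mmeas J μ) μ j rfl hμ hmax hj1 hj2
  intro n
  induction n using Nat.strong_induction_on with
  | _ n ih =>
    intro μ j hn hμ hmax hj1 hj2 hjnone
    have hjL : j ∈ ord.filter fun i => decide (i ∉ N1) :=
      List.mem_filter.2 ⟨hb.2 j, by simpa using hj1⟩
    obtain ⟨T, hTR, hTcond⟩ := srrRej_reject_spec hb.1 hjL hj2
    by_cases hex : ∃ (k : N) (c : C), μ k = some c ∧ J.Strict c (some j) (some k)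
    · obtain ⟨k, c, hk, hjk⟩ := hex
      obtain ⟨ν, hν, hνs, hνk, hνm⟩ := exchange_step hμ hj1 hj2 hjnone hk hjk
      have hknm : k ∉ N1 ∪ R := by
        intro h
        rw [hμ.1.2.1 k h] at hk
        exact (nomatch hk)
      exact ih (mmeas J ν) (hn ▸ hνm) ν k rfl hν (hνs.trans hmax)
        (fun h => hknm (Finset.mem_union_left _ h))
        (fun h => hknm (Finset.mem_union_right _ h)) hνk
    · push_neg at hex
      apply hTcond
      refine le_antisymm (msR_anti (Finset.empty_subset _)) ?_
      have hwit : PMatchR J cu1 cu2 N1 (insert j T) μ := by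
        refine ⟨⟨hμ.1.1, fun x hx => ?_, hμ.1.2.2⟩, fun a c ha r hr => ?_⟩
        · rcases Finset.mem_union.1 hx with h | h
          · exact hμ.1.2.1 x (Finset.mem_union_left _ h)
          · rcases Finset.mem_insert.1 h with h' | h'
            · exact h' ▸ hjnone
            · exact hμ.1.2.1 x (Finset.mem_union_right _ (hTR h'))
        · rcases Finset.mem_insert.1 hr with h' | h'
          · exact h' ▸ hex a c ha
          · exact hμ.2 a c ha r (hTR h')
      calc msR J cu1 cu2 N1 ∅ = msR J cu1 cu2 N1 R := (srrRej_msR J cu1 cu2 ord N1).symm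
        _ = msize μ := hmax.symm
        _ ≤ msR J cu1 cu2 N1 (insert j T) := le_msR hwit

/-- The matched set of a maximum RR matching is exactly the complement of `N1 ∪ R`. -/
lemma rr_matched_set (J : Inst N C) (cu1 cu2 : C) (ord : List N) (N1 : Finset N)
    (hb : IsBaseline ord) {μ : N → Option C}
    (hμ : PMatchR J cu1 cu2 N1 (srrRej J cu1 cu2 ord N1) μ)
    (hmax : msize μ = msR J cu1 cu2 N1 (srrRej J cu1 cu2 ord N1)) :
    (Finset.univ.filter fun a => μ a ≠ none)
      = Finset.univ \ (N1 ∪ srrRej J cu1 cu2 ord N1) := by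
  ext a
  simp only [Finset.mem_filter, Finset.mem_univ, true_and, Finset.mem_sdiff, Finset.mem_union]
  constructor
  · intro h hc
    exact h (hμ.1.2.1 a (Finset.mem_union.2 hc))
  · intro h
    push_neg at h
    exact rr_covers J cu1 cu2 ord N1 hb hμ hmax h.1 h.2

lemma rr_msize (J : Inst N C) (cu1 cu2 : C) (ord : List N) (N1 : Finset N)
    (hb : IsBaseline ord) {μ : N → Option C}
    (hμ : PMatchR J cu1 cu2 N1 (srrRej J cu1 cu2 ord N1) μ)
    (hmax : msize μ = msR J cu1 cu2 N1 (srrRej J cu1 cu2 ord N1)) :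
    msize μ + N1.card + (srrRej J cu1 cu2 ord N1).card = Fintype.card N := by
  classical
  have hdisj : Disjoint N1 (srrRej J cu1 cu2 ord N1) :=
    Finset.disjoint_right.2 fun a ha => srrRej_not_mem_N1 ha
  have h1 : msize μ = (Finset.univ \ (N1 ∪ srrRej J cu1 cu2 ord N1)).card := by
    unfold msize
    rw [rr_matched_set J cu1 cu2 ord N1 hb hμ hmax]
  rw [h1]
  have hsub : N1 ∪ srrRej J cu1 cu2 ord N1 ⊆ Finset.univ := Finset.subset_univ _
  have := Finset.card_sdiff_add_card_eq_card hsub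
  rw [Finset.card_union_of_disjoint hdisj] at this
  rw [← Finset.card_univ]
  omega

end AuxRej


section AuxN1

variable {I I' J : Inst N C} {i : N} {cu1 cu2 : C} {ord : List N}

noncomputable def nstep (J : Inst N C) (cu1 cu2 : C) : Finset N → N → Finset N :=
  fun N1 i =>
    if N1.card < J.quota cu1 ∧
        msAvoid J cu1 cu2 (insert i N1) = msAvoid J cu1 cu2 (∅ : Finset N) then
      insert i N1
    else N1

lemma srrN1_eq (J : Inst N C) (cu1 cu2 : C) (ord : List N) :
    srrN1 J cu1 cu2 ord = ord.foldl (nstep J cu1 cu2) ∅ := rfl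

lemma nstep_sub (J : Inst N C) (cu1 cu2 : C) : ∀ (T : Finset N) (x : N), T ⊆ nstep J cu1 cu2 T x := by
  intro T x
  unfold nstep
  split_ifs with h
  · exact Finset.subset_insert x T
  · exact Finset.Subset.refl T

lemma foldl_inv' {g : Finset N → N → Finset N} {P : Finset N → Prop}
    (hP : ∀ T x, P T → P (g T x)) (L : List N) {T : Finset N} (hT : P T) :
    P (L.foldl g T) := by
  induction L generalizing T with
  | nil => exact hT
  | cons x L ih => exact ih (hP T x hT)

lemma srrN1_msAvoid (J : Inst N C) (cu1 cu2 : C) (ord : List N) :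
    msAvoid J cu1 cu2 (srrN1 J cu1 cu2 ord) = msAvoid J cu1 cu2 ∅ := by
  rw [srrN1_eq]
  refine foldl_inv' (P := fun T => msAvoid J cu1 cu2 T = msAvoid J cu1 cu2 ∅) ?_ ord rfl
  intro T x hT
  unfold nstep
  split_ifs with h
  · exact h.2
  · exact hT

/-- Stage-1 coupling: the first-round sets coincide at `I` and `I'`. -/
lemma stage1_couple (hdec : PrioDecreases I I' i)
    (hm' : msAvoid I' cu1 cu2 (∅ : Finset N) = msAvoid I cu1 cu2 (∅ : Finset N))
    (hkey : ∀ S : Finset N, S ⊆ srrN1 I cu1 cu2 ord →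
      msAvoid I' cu1 cu2 S = msAvoid I cu1 cu2 (∅ : Finset N)) :
    srrN1 I' cu1 cu2 ord = srrN1 I cu1 cu2 ord := by
  have main : ∀ (L : List N) (acc : Finset N),
      L.foldl (nstep I cu1 cu2) acc ⊆ srrN1 I cu1 cu2 ord →
      L.foldl (nstep I' cu1 cu2) acc = L.foldl (nstep I cu1 cu2) acc := by
    intro L
    induction L with
    | nil => intro acc _; rfl
    | cons x L ih =>
      intro acc hsub
      simp only [List.foldl_cons] at hsub ⊢
      have hstep : nstep I' cu1 cu2 acc x = nstep I cu1 cu2 acc x := by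
        by_cases hc : acc.card < I.quota cu1 ∧
            msAvoid I cu1 cu2 (insert x acc) = msAvoid I cu1 cu2 (∅ : Finset N)
        · have h1 : nstep I cu1 cu2 acc x = insert x acc := by
            unfold nstep; rw [if_pos hc]
          have hinsub : insert x acc ⊆ srrN1 I cu1 cu2 ord := by
            rw [← h1]
            exact (foldl_subset (nstep_sub I cu1 cu2) L _).trans (h1 ▸ hsub)
          have h2 : nstep I' cu1 cu2 acc x = insert x acc := by
            unfold nstep
            rw [if_pos]
            constructor
            · rw [← hdec.1]; exact hc.1
            · rw [hkey _ hinsub, hm']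
          rw [h1, h2]
        · have h1 : nstep I cu1 cu2 acc x = acc := by
            unfold nstep; rw [if_neg hc]
          have h2 : nstep I' cu1 cu2 acc x = acc := by
            unfold nstep
            rw [if_neg]
            intro hc'
            apply hc
            constructor
            · rw [hdec.1]; exact hc'.1
            · refine le_antisymm (msAvoid_anti (Finset.empty_subset _)) ?_
              calc msAvoid I cu1 cu2 (∅ : Finset N)
                  = msAvoid I' cu1 cu2 (insert x acc) := by rw [hc'.2, hm']
                _ ≤ msAvoid I cu1 cu2 (insert x acc) := msAvoid_le_of' hdec _
          rw [h1, h2]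
      rw [hstep]
      exact ih _ hsub
  rw [srrN1_eq, srrN1_eq]
  exact main ord ∅ (by rw [← srrN1_eq])

end AuxN1

/-- The SRR rule is strategyproof: if agent `i`'s priority (for the
preferential categories) decreases from `I` to `I'`, where in both instances the priorities
of `c_u^1` and `c_u^2` equal the same baseline ordering and all agents are eligible for
them, and `i` is unmatched under the SRR rule at `I`, then `i` is unmatched at `I'`. -/
theorem srr_strategyproof (I I' : Inst N C) (cu1 cu2 : C) (order : List N) (i : N)
    (μ μ' : N → Option C) (hne : cu1 ≠ cu2) (hb : IsBaseline order)
    (h1E : ∀ j : N, I.Eligible j cu1) (h2E : ∀ j : N, I.Eligible j cu2)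
    (h1E' : ∀ j : N, I'.Eligible j cu1) (h2E' : ∀ j : N, I'.Eligible j cu2)
    (h1P : ∀ j k : N, I.Strict cu1 (some j) (some k) ↔ order.idxOf j < order.idxOf k)
    (h2P : ∀ j k : N, I.Strict cu2 (some j) (some k) ↔ order.idxOf j < order.idxOf k)
    (h1P' : ∀ j k : N, I'.Strict cu1 (some j) (some k) ↔ order.idxOf j < order.idxOf k)
    (h2P' : ∀ j k : N, I'.Strict cu2 (some j) (some k) ↔ order.idxOf j < order.idxOf k)
    (hdec : PrioDecreases I I' i)
    (hout : IsSRROutcome I cu1 cu2 order μ) (hout' : IsSRROutcome I' cu1 cu2 order μ')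
    (hunmatched : μ i = none) :
    μ' i = none := by
  classical
  obtain ⟨μP, hP, hPmax, hμdef⟩ := hout
  obtain ⟨μP', hP', hPmax', hμdef'⟩ := hout'
  set N1 : Finset N := srrN1 I cu1 cu2 order with hN1def
  set R : Finset N := srrRej I cu1 cu2 order N1 with hRdef
  -- extract the three facts expressing that `i` is unmatched at `I`
  rw [hμdef] at hunmatched
  simp only [srrFinal] at hunmatched
  by_cases hiN1 : i ∈ N1
  · rw [if_pos hiN1] at hunmatched
    exact absurd hunmatched (by simp)
  rw [if_neg hiN1] at hunmatched
  rcases hPi : μP i with _ | c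
  swap
  · rw [hPi] at hunmatched
    exact absurd hunmatched (by simp)
  rw [hPi] at hunmatched
  have hcount : ¬ ((Finset.univ.filter fun j =>
      j ∉ N1 ∧ μP j = none ∧ order.idxOf j < order.idxOf i).card < I.quota cu2) := by
    intro h
    rw [if_pos h] at hunmatched
    exact absurd hunmatched (by simp)
  clear hunmatched
  set m : ℕ := msize μP with hmdef
  have hiR : i ∈ R := by
    have hms := rr_matched_set I cu1 cu2 order N1 hb hP hPmax
    have hnm : i ∈ N1 ∪ R := by
      by_contra h
      have h2 : i ∈ Finset.univ \ (N1 ∪ R) := by simp [h]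
      rw [← hms] at h2
      simp [hPi] at h2
    rcases Finset.mem_union.1 hnm with h | h
    · exact absurd h hiN1
    · exact h
  have hmR : msR I cu1 cu2 N1 R = m := hPmax.symm
  have hmR0 : msR I cu1 cu2 N1 (∅ : Finset N) = m :=
    (srrRej_msR I cu1 cu2 order N1).symm.trans hmR
  have hN1m : msAvoid I cu1 cu2 N1 = m := by rw [← msR_empty]; exact hmR0
  have h0m : msAvoid I cu1 cu2 (∅ : Finset N) = m := by
    rw [← srrN1_msAvoid I cu1 cu2 order]; exact hN1m
  have hPins : PMatch I cu1 cu2 (insert i N1) μP := by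
    refine ⟨hP.1.1, fun x hx => ?_, hP.1.2.2⟩
    rcases Finset.mem_insert.1 hx with h | h
    · exact h ▸ hPi
    · exact hP.1.2.1 x (Finset.mem_union_left _ h)
  have hinsm : msAvoid I cu1 cu2 (insert i N1) = m := by
    refine le_antisymm (h0m ▸ msAvoid_anti (Finset.empty_subset _)) (le_msAvoid hPins)
  have hm' : msAvoid I' cu1 cu2 (∅ : Finset N) = m := by
    refine le_antisymm (h0m ▸ msAvoid_le_of' hdec _) ?_
    have h1 : msAvoid I' cu1 cu2 {i} = msAvoid I cu1 cu2 {i} :=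
      msAvoid_eq_of_mem hdec (Finset.mem_singleton_self i)
    have h2 : m ≤ msAvoid I cu1 cu2 {i} := by
      refine le_msAvoid ⟨hP.1.1, fun x hx => ?_, hP.1.2.2⟩
      rw [Finset.mem_singleton.1 hx]; exact hPi
    calc m ≤ msAvoid I cu1 cu2 {i} := h2
      _ = msAvoid I' cu1 cu2 {i} := h1.symm
      _ ≤ msAvoid I' cu1 cu2 ∅ := msAvoid_anti (Finset.empty_subset _)
  have hkey : ∀ S : Finset N, S ⊆ N1 →
      msAvoid I' cu1 cu2 S = msAvoid I cu1 cu2 (∅ : Finset N) := by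
    intro S hS
    rw [h0m]
    refine le_antisymm (hm' ▸ msAvoid_anti (Finset.empty_subset _)) ?_
    calc m = msAvoid I cu1 cu2 (insert i N1) := hinsm.symm
      _ = msAvoid I' cu1 cu2 (insert i N1) :=
        (msAvoid_eq_of_mem hdec (Finset.mem_insert_self _ _)).symm
      _ ≤ msAvoid I' cu1 cu2 S := msAvoid_anti (hS.trans (Finset.subset_insert _ _))
  have hN1' : srrN1 I' cu1 cu2 order = N1 := stage1_couple hdec (by rw [hm', h0m]) hkey
  rw [hN1'] at hP' hPmax' hμdef'
  set R' : Finset N := srrRej I' cu1 cu2 order N1 with hR'def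
  have hm'0 : msR I' cu1 cu2 N1 (∅ : Finset N) = m := by
    rw [msR_empty]
    exact (hkey N1 (Finset.Subset.refl _)).trans h0m
  -- decompose the order around i
  obtain ⟨A, B, hordeq⟩ := List.append_of_mem (hb.2 i)
  have hordnd : (A ++ i :: B).Nodup := hordeq ▸ hb.1
  have hiA : i ∉ A := fun h => (List.nodup_append.1 hordnd).2.2 i h i List.mem_cons_self rfl
  have hiB : i ∉ B := (List.nodup_cons.1 (List.nodup_append.1 hordnd).2.1).1
  have hidxi : order.idxOf i = A.length := by
    rw [hordeq, List.idxOf_append_of_notMem hiA, List.idxOf_cons_self]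
    omega
  have hidxA : ∀ x ∈ A, order.idxOf x < order.idxOf i := by
    intro x hx
    have h1 : order.idxOf x = A.idxOf x := by
      rw [hordeq, List.idxOf_append_of_mem hx]
    rw [h1, hidxi]
    exact List.idxOf_lt_length_iff.2 hx
  have hidxB : ∀ x ∈ B, order.idxOf i < order.idxOf x := by
    intro x hx
    have hxA : x ∉ A := by
      intro h
      exact (List.nodup_append.1 hordnd).2.2 x h x (List.mem_cons_of_mem i hx) rfl
    have hxi : x ≠ i := fun h => hiB (h ▸ hx)
    have h1 : order.idxOf x = A.length + (i :: B).idxOf x := by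
      rw [hordeq, List.idxOf_append_of_notMem hxA]
    have h2 : (i :: B).idxOf x = (B.idxOf x) + 1 := by
      rw [List.idxOf_cons_ne _ (Ne.symm hxi)]
    rw [h1, h2, hidxi]
    omega
  set p : N → Bool := fun j => decide (j ∉ N1) with hpdef
  have hpi : p i = true := by simp [hpdef, hiN1]
  set L1 : List N := A.filter p with hL1def
  set L2 : List N := B.filter p with hL2def
  have hLdec : order.filter p = L1 ++ i :: L2 := by
    rw [hordeq, List.filter_append, List.filter_cons, if_pos hpi]
  have hLnd : (order.filter p).Nodup := hb.1.filter p
  have hL12nd : (L1 ++ i :: L2).Nodup := hLdec ▸ hLnd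
  have hiL1 : i ∉ L1 := fun h => (List.nodup_append.1 hL12nd).2.2 i h i List.mem_cons_self rfl
  have hiL2 : i ∉ L2 := (List.nodup_cons.1 (List.nodup_append.1 hL12nd).2.1).1
  have hrstep_or := rstep_or I cu1 cu2 N1
  have hrstep_or' := rstep_or I' cu1 cu2 N1
  have hsrrRej_filter : srrRej I cu1 cu2 order N1 =
      (order.filter p).foldr (rstep I cu1 cu2 N1) ∅ := srrRej_eq I cu1 cu2 order N1
  have hsrrRej_filter' : srrRej I' cu1 cu2 order N1 =
      (order.filter p).foldr (rstep I' cu1 cu2 N1) ∅ := srrRej_eq I' cu1 cu2 order N1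
  have hRform : R = L1.foldr (rstep I cu1 cu2 N1)
      (rstep I cu1 cu2 N1 i (L2.foldr (rstep I cu1 cu2 N1) ∅)) := by
    rw [hRdef, hsrrRej_filter, hLdec, List.foldr_append, List.foldr_cons]
  have hsufsub : ∀ (L2a M : List N), L2 = L2a ++ M →
      M.foldr (rstep I cu1 cu2 N1) ∅ ⊆ R := by
    intro L2a M hM
    have h1 : M.foldr (rstep I cu1 cu2 N1) ∅ ⊆ L2.foldr (rstep I cu1 cu2 N1) ∅ := by
      rw [hM, List.foldr_append]
      exact foldr_subset hrstep_or L2a _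
    have h2 : L2.foldr (rstep I cu1 cu2 N1) ∅ ⊆
        rstep I cu1 cu2 N1 i (L2.foldr (rstep I cu1 cu2 N1) ∅) := by
      rcases hrstep_or i (L2.foldr (rstep I cu1 cu2 N1) ∅) with h | h <;> rw [h]
      exact Finset.subset_insert _ _
    rw [hRform]
    exact (h1.trans h2).trans (foldr_subset hrstep_or L1 _)
  have couple : ∀ (M L2a : List N), L2 = L2a ++ M →
      M.foldr (rstep I' cu1 cu2 N1) ∅ = M.foldr (rstep I cu1 cu2 N1) ∅ := by
    intro M
    induction M with
    | nil => intro _ _; rfl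
    | cons x M ih =>
      intro L2a hM
      have hM' : L2 = (L2a ++ [x]) ++ M := by rw [hM, List.append_assoc]; rfl
      have ihM := ih (L2a ++ [x]) hM'
      rw [List.foldr_cons, List.foldr_cons, ihM]
      set T : Finset N := M.foldr (rstep I cu1 cu2 N1) ∅ with hTdef
      have hxL2 : x ∈ L2 := by
        rw [hM]; exact List.mem_append_right _ (List.mem_cons_self)
      have hxi : x ≠ i := fun h => hiL2 (h ▸ hxL2)
      have hiT : i ∉ T := by
        intro h
        rcases foldr_mem hrstep_or M ∅ h with h' | h'
        · exact Finset.notMem_empty i h'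
        · exact hiL2 (by rw [hM]; exact List.mem_append_right _ (List.mem_cons_of_mem x h'))
      have hTsub : T ⊆ R := hsufsub (L2a ++ [x]) M hM'
      by_cases hc : msR I cu1 cu2 N1 (insert x T) = msR I cu1 cu2 N1 (∅ : Finset N)
      · have hstep1 : rstep I cu1 cu2 N1 x T = insert x T := by
          unfold rstep; rw [if_pos hc]
        have hxTR : insert x T ⊆ R := by
          rw [← hstep1]
          have h2 := hsufsub L2a (x :: M) hM
          rw [List.foldr_cons] at h2
          exact h2
        have hc' : msR I' cu1 cu2 N1 (insert x T) = msR I' cu1 cu2 N1 (∅ : Finset N) := by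
          refine le_antisymm (msR_anti (Finset.empty_subset _)) ?_
          rw [hm'0, hmdef]
          exact le_msR (pmatchR_to' hdec hiR hxTR hP)
        unfold rstep
        rw [if_pos hc, if_pos hc']
      · have hc' : ¬ (msR I' cu1 cu2 N1 (insert x T) = msR I' cu1 cu2 N1 (∅ : Finset N)) := by
          intro hc2
          apply hc
          refine le_antisymm (msR_anti (Finset.empty_subset _)) ?_
          rw [hmR0]
          have hins : i ∉ insert x T := by
            intro h
            rcases Finset.mem_insert.1 h with h' | h'
            · exact hxi h'.symm
            · exact hiT h'
          calc m = msR I' cu1 cu2 N1 (insert x T) := by rw [hc2, hm'0]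
            _ ≤ msR I cu1 cu2 N1 (insert x T) := msR_le_of' hdec hins N1
        unfold rstep
        rw [if_neg hc, if_neg hc']
  set T0pre : Finset N := L2.foldr (rstep I cu1 cu2 N1) ∅ with hT0predef
  have hT0eq : L2.foldr (rstep I' cu1 cu2 N1) ∅ = T0pre := couple L2 [] rfl
  have hiacc : rstep I cu1 cu2 N1 i T0pre = insert i T0pre := by
    have hx : i ∈ (L1 ++ i :: L2).foldr (rstep I cu1 cu2 N1) ∅ := by
      rw [← hLdec, ← hsrrRej_filter]
      exact hiR
    exact mem_foldr_self hrstep_or hiL1 (Finset.notMem_empty i) hiL2 hx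
  have hT0preR : T0pre ⊆ R := hsufsub [] L2 rfl
  have hinsT0R : insert i T0pre ⊆ R := by
    rw [← hiacc, hRform]
    exact foldr_subset hrstep_or L1 _
  have hiacc' : rstep I' cu1 cu2 N1 i T0pre = insert i T0pre := by
    unfold rstep
    rw [if_pos]
    refine le_antisymm (msR_anti (Finset.empty_subset _)) ?_
    rw [hm'0, hmdef]
    exact le_msR (pmatchR_to' hdec hiR hinsT0R hP)
  set T0 : Finset N := insert i T0pre with hT0def
  have hRform2 : R = L1.foldr (rstep I cu1 cu2 N1) T0 := by rw [hRform, hiacc]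
  have hR'form : R' = L1.foldr (rstep I' cu1 cu2 N1) T0 := by
    rw [hR'def, hsrrRej_filter', hLdec, List.foldr_append, List.foldr_cons, hT0eq, hiacc']
  have hT0R' : T0 ⊆ R' := by
    rw [hR'form]
    exact foldr_subset hrstep_or' L1 _
  have hiR' : i ∈ R' := hT0R' (Finset.mem_insert_self _ _)
  -- cardinalities
  have hsz : msize μP + N1.card + R.card = Fintype.card N :=
    rr_msize I cu1 cu2 order N1 hb hP hPmax
  have hμP'm : msize μP' = m := by
    rw [hPmax', hR'def, srrRej_msR I' cu1 cu2 order N1]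
    exact hm'0
  have hsz' : msize μP' + N1.card + R'.card = Fintype.card N :=
    rr_msize I' cu1 cu2 order N1 hb hP' hPmax'
  have hcardRR' : R.card = R'.card := by
    rw [hμP'm] at hsz'
    rw [← hmdef] at hsz
    omega
  -- the unmatched agents outside N1 at I are exactly R
  have hUR : ∀ j : N, (j ∉ N1 ∧ μP j = none) ↔ j ∈ R := by
    intro j
    constructor
    · rintro ⟨h1, h2⟩
      by_contra h3
      exact rr_covers I cu1 cu2 order N1 hb hP hPmax h1 h3 h2
    · intro h
      exact ⟨srrRej_not_mem_N1 h, hP.1.2.1 j (Finset.mem_union_right _ h)⟩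
  have hsetI : (Finset.univ.filter fun j =>
      j ∉ N1 ∧ μP j = none ∧ order.idxOf j < order.idxOf i)
      = R.filter fun j => order.idxOf j < order.idxOf i := by
    ext j
    simp only [Finset.mem_filter, Finset.mem_univ, true_and]
    constructor
    · rintro ⟨h1, h2, h3⟩
      exact ⟨(hUR j).1 ⟨h1, h2⟩, h3⟩
    · rintro ⟨h1, h2⟩
      obtain ⟨ha, hbb⟩ := (hUR j).2 h1
      exact ⟨ha, hbb, h2⟩
  rw [hsetI] at hcount
  -- positional analysis
  have hT0pos : ∀ x ∈ T0, ¬ order.idxOf x < order.idxOf i := by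
    intro x hx
    rcases Finset.mem_insert.1 hx with h | h
    · rw [h]; exact lt_irrefl _
    · rcases foldr_mem hrstep_or L2 ∅ h with h' | h'
      · exact absurd h' (Finset.notMem_empty x)
      · exact fun hlt => absurd (hidxB x (List.mem_of_mem_filter h')) (by omega)
  have hfilter_eq : ∀ S : Finset N, T0 ⊆ S → (∀ x ∈ S, x ∈ T0 ∨ x ∈ L1) →
      S.filter (fun j => order.idxOf j < order.idxOf i) = S \ T0 := by
    intro S hsub hmem
    ext x
    simp only [Finset.mem_filter, Finset.mem_sdiff]
    constructor
    · rintro ⟨h1, h2⟩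
      exact ⟨h1, fun h => hT0pos x h h2⟩
    · rintro ⟨h1, h2⟩
      refine ⟨h1, ?_⟩
      rcases hmem x h1 with h | h
      · exact absurd h h2
      · exact hidxA x (List.mem_of_mem_filter h)
  have hmemR : ∀ x ∈ R, x ∈ T0 ∨ x ∈ L1 := by
    intro x hx
    rw [hRform2] at hx
    rcases foldr_mem hrstep_or L1 T0 hx with h | h
    · exact Or.inl h
    · exact Or.inr h
  have hmemR' : ∀ x ∈ R', x ∈ T0 ∨ x ∈ L1 := by
    intro x hx
    rw [hR'form] at hx
    rcases foldr_mem hrstep_or' L1 T0 hx with h | h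
    · exact Or.inl h
    · exact Or.inr h
  rw [hfilter_eq R hinsT0R hmemR, Finset.card_sdiff_of_subset hinsT0R] at hcount
  have hfin : I.quota cu2 ≤
      ((R'.filter fun j => order.idxOf j < order.idxOf i)).card := by
    rw [hfilter_eq R' hT0R' hmemR', Finset.card_sdiff_of_subset hT0R']
    omega
  -- conclude
  rw [hμdef']
  simp only [srrFinal]
  rw [if_neg hiN1]
  have hμP'i : μP' i = none := hP'.1.2.1 i (Finset.mem_union_right _ hiR')
  rw [hμP'i]
  have hsub' : (R'.filter fun j => order.idxOf j < order.idxOf i) ⊆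
      Finset.univ.filter fun j =>
        j ∉ N1 ∧ μP' j = none ∧ order.idxOf j < order.idxOf i := by
    intro x hx
    simp only [Finset.mem_filter, Finset.mem_univ, true_and] at hx ⊢
    exact ⟨srrRej_not_mem_N1 hx.1, hP'.1.2.1 x (Finset.mem_union_right _ hx.1), hx.2⟩
  have hge : I'.quota cu2 ≤ (Finset.univ.filter fun j =>
      j ∉ N1 ∧ μP' j = none ∧ order.idxOf j < order.idxOf i).card := by
    rw [← hdec.1]
    exact hfin.trans (Finset.card_le_card hsub')
  rw [if_neg (by omega)]
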